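/- Under the blow-up change of coordinates p̃ = Φ^s_r(p), the transformed coefficient ã^{rr}(p̃) = Σ_{i,j} a^{ij}(p)(∂p̃^r/∂p^i)(∂p̃^r/∂p^j) equals p̃^r(1−p̃^r)/p̃^s, where a^{ij}(p) = p^i(δ^i_j − p^j). -/

import Mathlib

/-- Under the blow-up p̃ = Φ^s_r(p), the transformed coefficient
ã^{rr}(p̃) = Σ_{i,j} a^{ij}(p)(∂p̃^r/∂p^i)(∂p̃^r/∂p^j) equals p̃^r(1−p̃^r)/p̃^s. -/
theorem blowup_coeff_rr (d : ℕ) (s r : Fin d) (hsr : s ≠ r)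
    (Φ : (Fin d → ℝ) → (Fin d → ℝ))
    (hΦ : ∀ p i, Φ p i =
      if i = s then p s + p r else if i = r then p r / (p s + p r) else p i)
    (a : (Fin d → ℝ) → Fin d → Fin d → ℝ)
    (ha : ∀ p i j, a p i j = p i * ((if i = j then (1:ℝ) else 0) - p j))
    (p : Fin d → ℝ) (hp : 0 < p s + p r) :
    (∑ i, ∑ j, a p i j *
        fderiv ℝ (fun q => Φ q r) p (Pi.single i 1) *
        fderiv ℝ (fun q => Φ q r) p (Pi.single j 1))
      = Φ p r * (1 - Φ p r) / Φ p s := by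
  set T : ℝ := p s + p r with hT
  have hT0 : T ≠ 0 := ne_of_gt hp
  -- the function q ↦ Φ q r is q ↦ q r / (q s + q r)
  have hfun : (fun q : Fin d → ℝ => Φ q r) = fun q => q r * (q s + q r)⁻¹ := by
    funext q
    rw [hΦ q r, if_neg (Ne.symm hsr), if_pos rfl, div_eq_mul_inv]
  -- derivative computation
  have hproj : ∀ i : Fin d, HasFDerivAt (fun q : Fin d → ℝ => q i)
      (ContinuousLinearMap.proj (R := ℝ) (φ := fun _ : Fin d => ℝ) i) p := by
    intro i
    exact (ContinuousLinearMap.proj (R := ℝ) (φ := fun _ : Fin d => ℝ) i).hasFDerivAt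
  have h1 := hproj r
  have h2 : HasFDerivAt (fun q : Fin d → ℝ => q s + q r)
      (ContinuousLinearMap.proj (R := ℝ) (φ := fun _ : Fin d => ℝ) s
        + ContinuousLinearMap.proj (R := ℝ) (φ := fun _ : Fin d => ℝ) r) p :=
    (hproj s).add (hproj r)
  have h2inv : HasFDerivAt (fun q : Fin d → ℝ => (q s + q r)⁻¹)
      ((-(T ^ 2)⁻¹) • (ContinuousLinearMap.proj (R := ℝ) (φ := fun _ : Fin d => ℝ) s + ContinuousLinearMap.proj (R := ℝ) (φ := fun _ : Fin d => ℝ) r)) p :=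
    (hasDerivAt_inv hT0).comp_hasFDerivAt p h2
  have hmul : HasFDerivAt (fun q : Fin d → ℝ => q r * (q s + q r)⁻¹)
      (p r • ((-(T ^ 2)⁻¹) • (ContinuousLinearMap.proj (R := ℝ) (φ := fun _ : Fin d => ℝ) s + ContinuousLinearMap.proj (R := ℝ) (φ := fun _ : Fin d => ℝ) r))
        + T⁻¹ • (ContinuousLinearMap.proj (R := ℝ) (φ := fun _ : Fin d => ℝ) r)) p := by
    have := h1.mul h2inv
    simp only [← hT] at this
    simpa [Pi.mul_def] using this
  have hD : fderiv ℝ (fun q => Φ q r) p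
      = (p r • ((-(T ^ 2)⁻¹) • (ContinuousLinearMap.proj (R := ℝ) (φ := fun _ : Fin d => ℝ) s + ContinuousLinearMap.proj (R := ℝ) (φ := fun _ : Fin d => ℝ) r))
        + T⁻¹ • (ContinuousLinearMap.proj (R := ℝ) (φ := fun _ : Fin d => ℝ) r)) := by
    rw [hfun]; exact hmul.fderiv
  set c : Fin d → ℝ := fun i => if i = s then -(p r) / T ^ 2 else if i = r then p s / T ^ 2 else 0
    with hc
  have hkey : ∀ i, fderiv ℝ (fun q => Φ q r) p (Pi.single i 1) = c i := by
    intro i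
    rw [hD]
    simp only [ContinuousLinearMap.add_apply, ContinuousLinearMap.smul_apply,
      ContinuousLinearMap.proj_apply, Pi.single_apply, hc]
    by_cases his : i = s
    · subst his
      simp only [smul_eq_mul]
      simp [Ne.symm hsr]
      field_simp
    · by_cases hir : i = r
      · subst hir
        simp only [smul_eq_mul]
        simp [hsr, his]
        rw [hT]
        field_simp
        ring
      · simp only [smul_eq_mul]
        simp [his, hir, Ne.symm his, Ne.symm hir]
  simp only [hkey]
  -- collapse the double sum to the four terms with indices in {s, r}
  have houter : ∀ i : Fin d, i ≠ s → i ≠ r → (∑ j, a p i j * c i * c j) = 0 := by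
    intro i his hir
    have : c i = 0 := by rw [hc]; simp [his, hir]
    simp [this]
  rw [Fintype.sum_eq_add s r hsr (fun x hx => houter x hx.1 hx.2)]
  have hinner : ∀ (i : Fin d), ∀ j : Fin d, j ≠ s → j ≠ r → a p i j * c i * c j = 0 := by
    intro i j hjs hjr
    have : c j = 0 := by rw [hc]; simp [hjs, hjr]
    simp [this]
  rw [Fintype.sum_eq_add s r hsr (fun x hx => hinner s x hx.1 hx.2),
    Fintype.sum_eq_add s r hsr (fun x hx => hinner r x hx.1 hx.2)]
  have hcs : c s = -(p r) / T ^ 2 := by rw [hc]; simp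
  have hcr : c r = p s / T ^ 2 := by rw [hc]; simp [Ne.symm hsr]
  have hΦr : Φ p r = p r / T := by rw [hΦ p r, if_neg (Ne.symm hsr), if_pos rfl]
  have hΦs : Φ p s = T := by rw [hΦ p s, if_pos rfl]
  rw [hcs, hcr, hΦr, hΦs, ha p s s, ha p s r, ha p r s, ha p r r,
    if_pos rfl, if_neg hsr, if_neg (Ne.symm hsr), if_pos rfl]
  have hT' : p s + p r = T := rfl
  field_simp
  ring_nf
  rw [hT]
  ring
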